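/- Example 2 (sharpness of Theorems 1–3 for α > 0): Let n ≥ 1, α > 0 and q > 1 + α/n. Let β = 1/(q−1), 1/(αn(q−1)) < γ ≤ 1/α², and 0 < κ ≤ (αn(γ − 1/(αn(q−1))))^{1/(q−1)}. Define u(t,x) = κ t^{−β} exp(−γ(1+|x|²)^{α/2}/t) for t > 0 and u(t,x) = 0 for t ≤ 0, and let a_{ij}(t,x) = (1+|x|²)^{(2−α)/2} δ_{ij}. Then u is C^∞ on ℝ × ℝⁿ, nonnegative, not identically zero, and satisfies the pointwise inequality u_t(t,x) ≥ Σ_{i=1}^n ∂_{x_i}(a_{ii} ∂_{x_i}u)(t,x) + |u(t,x)|^{q−1}u(t,x) for every (t,x) ∈ ℝ × ℝⁿ; i.e., u is a nontrivial nonnegative classical solution of inequality (4) in the whole space with an operator whose coefficients satisfy condition (8) with exponent α. -/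

import Mathlib

open MeasureTheory

noncomputable section

/-- The whole space `ℝ × ℝⁿ` (time × space). -/
abbrev Sp (n : ℕ) : Type := ℝ × EuclideanSpace ℝ (Fin n)

/-- Classical partial derivative in the time direction. -/
def pdt {n : ℕ} (f : Sp n → ℝ) (p : Sp n) : ℝ :=
  fderiv ℝ f p (1, 0)

/-- Classical partial derivative in the `i`-th space direction. -/
def pdx {n : ℕ} (i : Fin n) (f : Sp n → ℝ) (p : Sp n) : ℝ :=
  fderiv ℝ f p (0, EuclideanSpace.single i 1)

/-- The odd nonlinearity `s ↦ |s|^(q-1) s` (with the convention `|0|^(q-1)·0 = 0`). -/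
def nl (q s : ℝ) : ℝ := |s| ^ (q - 1) * s

/-- A test function: infinitely differentiable with compact support. -/
def IsTest {n : ℕ} (φ : Sp n → ℝ) : Prop :=
  ContDiff ℝ (⊤ : ℕ∞) φ ∧ HasCompactSupport φ

/-- `g` is the weak time-derivative of `u` on `ℝ × ℝⁿ`: `g` is locally integrable and
integration by parts against every test function holds. -/
def IsWeakDerivT {n : ℕ} (u g : Sp n → ℝ) : Prop :=
  LocallyIntegrable g volume ∧
  ∀ φ : Sp n → ℝ, IsTest φ → ∫ p, u p * pdt φ p = -∫ p, g p * φ p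

/-- `g` is the weak `x_i`-derivative of `u` on `ℝ × ℝⁿ`. -/
def IsWeakDerivX {n : ℕ} (i : Fin n) (u g : Sp n → ℝ) : Prop :=
  LocallyIntegrable g volume ∧
  ∀ φ : Sp n → ℝ, IsTest φ → ∫ p, u p * pdx i φ p = -∫ p, g p * φ p

/-- Standing assumptions on the coefficients `a_{ij}` and the dominating function `A`:
measurability, local boundedness, symmetry, and `0 ≤ Σ a_{ij} ξ_i ξ_j ≤ A |ξ|²` a.e. -/
structure Coeffs (n : ℕ) (a : Fin n → Fin n → Sp n → ℝ) (A : Sp n → ℝ) : Prop where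
  meas : ∀ i j, Measurable (a i j)
  locBdd : ∀ i j, ∀ K : Set (Sp n), IsCompact K → ∃ C : ℝ, ∀ p ∈ K, |a i j p| ≤ C
  symm : ∀ᵐ p : Sp n, ∀ i j, a i j p = a j i p
  measA : Measurable A
  nonnegA : ∀ p, 0 ≤ A p
  locBddA : ∀ K : Set (Sp n), IsCompact K → ∃ C : ℝ, ∀ p ∈ K, A p ≤ C
  quad : ∀ᵐ p : Sp n, ∀ ξ : Fin n → ℝ,
    0 ≤ ∑ i : Fin n, ∑ j : Fin n, a i j p * ξ i * ξ j ∧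
    ∑ i : Fin n, ∑ j : Fin n, a i j p * ξ i * ξ j ≤ A p * ∑ i : Fin n, ξ i ^ 2

/-- Condition (8): the essential supremum of `A` over the slab `{R/2 < |x| < R}`
is at most `c·R^(2-α)`, for every `R > 1`. -/
def Cond8 {n : ℕ} (A : Sp n → ℝ) (α c : ℝ) : Prop :=
  ∀ R : ℝ, 1 < R →
    ∀ᵐ p : Sp n, (R / 2 < ‖p.2‖ ∧ ‖p.2‖ < R) → A p ≤ c * R ^ (2 - α)

/-- `(u, v)` is a weak solution of
`u_t − Σ ∂_{x_i}(a_{ij} ∂_{x_j}u) − |u|^{q−1}u ≥ v_t − Σ ∂_{x_i}(a_{ij} ∂_{x_j}v) − |v|^{q−1}v`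
in the whole space `ℝ × ℝⁿ`. -/
def WeakSolPair {n : ℕ} (q : ℝ) (a : Fin n → Fin n → Sp n → ℝ) (u v : Sp n → ℝ) : Prop :=
  Measurable u ∧ Measurable v ∧
  LocallyIntegrable u volume ∧ LocallyIntegrable v volume ∧
  LocallyIntegrable (fun p => |u p| ^ q) volume ∧
  LocallyIntegrable (fun p => |v p| ^ q) volume ∧
  ∃ ut vt : Sp n → ℝ, ∃ ux vx : Fin n → Sp n → ℝ,
    IsWeakDerivT u ut ∧ IsWeakDerivT v vt ∧
    (∀ j, IsWeakDerivX j u (ux j)) ∧ (∀ j, IsWeakDerivX j v (vx j)) ∧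
    ∀ φ : Sp n → ℝ, IsTest φ → (∀ p, 0 ≤ φ p) →
      ∫ p, (vt p * φ p + ∑ i : Fin n, ∑ j : Fin n, a i j p * pdx i φ p * vx j p
              - nl q (v p) * φ p) ≤
      ∫ p, (ut p * φ p + ∑ i : Fin n, ∑ j : Fin n, a i j p * pdx i φ p * ux j p
              - nl q (u p) * φ p)

/-- The Example 2 profile: `u(t,x) = κ t^{−β} exp(−γ(1+|x|²)^{α/2}/t)` for `t > 0`,
extended by `0` for `t ≤ 0`. -/
def profileU (n : ℕ) (α β γ κ : ℝ) (p : Sp n) : ℝ :=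
  if 0 < p.1 then κ * p.1 ^ (-β) * Real.exp (-γ * (1 + ‖p.2‖ ^ 2) ^ (α / 2) / p.1) else 0

/-- The diagonal coefficient `a_{ii}(t,x) = (1+|x|²)^{(2−α)/2}`. -/
def coefDiag (n : ℕ) (α : ℝ) (p : Sp n) : ℝ :=
  (1 + ‖p.2‖ ^ 2) ^ ((2 - α) / 2)

open Polynomial Real Filter Set Topology


/-- glue function: `p(x⁻¹) x^(−b) exp(−x⁻¹)` for `x>0`, `0` otherwise. -/
def Gl (b : ℝ) (p : ℝ[X]) (x : ℝ) : ℝ :=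
  if 0 < x then p.eval x⁻¹ * x ^ (-b) * Real.exp (-x⁻¹) else 0

lemma Gl_of_pos {x : ℝ} (hx : 0 < x) (b : ℝ) (p : ℝ[X]) :
    Gl b p x = p.eval x⁻¹ * x ^ (-b) * Real.exp (-x⁻¹) := if_pos hx

lemma Gl_of_nonpos {x : ℝ} (hx : x ≤ 0) (b : ℝ) (p : ℝ[X]) : Gl b p x = 0 :=
  if_neg (not_lt.2 hx)

lemma tendsto_poly_rpow_exp (b : ℝ) (p : ℝ[X]) :
    Tendsto (fun y : ℝ => p.eval y * y ^ b * Real.exp (-y)) atTop (𝓝 0) := by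
  have h1 : Tendsto (fun y : ℝ =>
      (p.comp (Polynomial.C 2 * Polynomial.X)).eval (y / 2) / Real.exp (y / 2)) atTop (𝓝 0) :=
    (Polynomial.tendsto_div_exp_atTop _).comp (tendsto_id.atTop_div_const two_pos)
  have h2 := tendsto_rpow_mul_exp_neg_mul_atTop_nhds_zero b (1 / 2) (by norm_num)
  have h3 := h1.mul h2
  rw [mul_zero] at h3
  refine h3.congr' ?_
  filter_upwards [eventually_gt_atTop (0 : ℝ)] with y hy
  have he : Real.exp (-y) = (Real.exp (y / 2))⁻¹ * Real.exp (-(1 / 2) * y) := by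
    rw [← Real.exp_neg, ← Real.exp_add]; congr 1; ring
  rw [Polynomial.eval_comp]
  simp only [Polynomial.eval_mul, Polynomial.eval_C, Polynomial.eval_X]
  rw [show (2 : ℝ) * (y / 2) = y by ring, he, div_eq_mul_inv]
  ring

lemma tendsto_Gl (b : ℝ) (p : ℝ[X]) : Tendsto (Gl b p) (𝓝[>] (0 : ℝ)) (𝓝 0) := by
  have h := (tendsto_poly_rpow_exp b p).comp tendsto_inv_nhdsGT_zero
  refine h.congr' ?_
  filter_upwards [self_mem_nhdsWithin] with x hx
  have hx : (0 : ℝ) < x := hx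
  simp only [Function.comp]
  rw [Gl_of_pos hx, Real.rpow_neg hx.le, ← Real.inv_rpow hx.le]

lemma tendsto_Gl_nhds (b : ℝ) (p : ℝ[X]) : Tendsto (Gl b p) (𝓝 (0 : ℝ)) (𝓝 0) := by
  have hL : Tendsto (Gl b p) (𝓝[≤] (0 : ℝ)) (𝓝 0) := by
    have hc : Tendsto (fun _ : ℝ => (0 : ℝ)) (𝓝[≤] (0 : ℝ)) (𝓝 0) := tendsto_const_nhds
    refine Tendsto.congr' ?_ hc
    filter_upwards [self_mem_nhdsWithin] with x hx
    exact (Gl_of_nonpos hx b p).symm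
  have h := tendsto_sup.2 ⟨hL, tendsto_Gl b p⟩
  rwa [nhdsLE_sup_nhdsGT] at h

/-- derivative bookkeeping polynomial -/
def Qd (b : ℝ) (p : ℝ[X]) : ℝ[X] :=
  Polynomial.X ^ 2 * (p - Polynomial.derivative p) - Polynomial.C b * (Polynomial.X * p)

lemma hasDerivAt_Gl (b : ℝ) (p : ℝ[X]) (x : ℝ) :
    HasDerivAt (Gl b p) (Gl b (Qd b p) x) x := by
  rcases lt_trichotomy x 0 with hx | rfl | hx
  · rw [Gl_of_nonpos hx.le]
    refine (hasDerivAt_const _ 0).congr_of_eventuallyEq ?_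
    filter_upwards [gt_mem_nhds hx] with y hy
    rw [Gl_of_nonpos hy.le]
  · rw [Gl_of_nonpos le_rfl, hasDerivAt_iff_tendsto_slope]
    refine ((tendsto_Gl_nhds b (Polynomial.X * p)).mono_left inf_le_left).congr' ?_
    filter_upwards [self_mem_nhdsWithin] with y hy
    have hy : y ≠ 0 := hy
    rcases hy.lt_or_gt with h | h
    · rw [slope_def_field, Gl_of_nonpos h.le, Gl_of_nonpos le_rfl, Gl_of_nonpos h.le]
      simp
    · rw [slope_def_field, Gl_of_pos h, Gl_of_nonpos le_rfl, Gl_of_pos h]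
      simp only [Polynomial.eval_mul, Polynomial.eval_X]
      rw [sub_zero, sub_zero, div_eq_mul_inv]
      ring
  · have hinv : HasDerivAt (fun y : ℝ => y⁻¹) (-(x ^ 2)⁻¹) x := hasDerivAt_inv hx.ne'
    have h1 : HasDerivAt (fun y : ℝ => p.eval y⁻¹)
        (Polynomial.eval x⁻¹ (Polynomial.derivative p) * -(x ^ 2)⁻¹) x :=
      (p.hasDerivAt x⁻¹).comp x hinv
    have h2 : HasDerivAt (fun y : ℝ => y ^ (-b)) (-b * x ^ (-b - 1)) x :=
      Real.hasDerivAt_rpow_const (Or.inl hx.ne')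
    have h3 : HasDerivAt (fun y : ℝ => Real.exp (-y⁻¹)) (Real.exp (-x⁻¹) * (x ^ 2)⁻¹) x := by
      have := (Real.hasDerivAt_exp (-x⁻¹)).comp x hinv.neg
      exact this.congr_deriv (by ring)
    have h4 := (h1.mul h2).mul h3
    have heq : Gl b p =ᶠ[𝓝 x] fun y => p.eval y⁻¹ * y ^ (-b) * Real.exp (-y⁻¹) := by
      filter_upwards [lt_mem_nhds hx] with y hy
      exact Gl_of_pos hy b p
    have h5 := h4.congr_of_eventuallyEq heq
    refine h5.congr_deriv ?_
    rw [Gl_of_pos hx]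
    have e1 : (x ^ 2)⁻¹ = x⁻¹ * x⁻¹ := by rw [sq, mul_inv]
    have e2 : x ^ (-b - 1) = x ^ (-b) * x⁻¹ := by
      rw [show -b - 1 = -b + -1 by ring, Real.rpow_add hx, Real.rpow_neg_one]
    simp only [Qd, Polynomial.eval_sub, Polynomial.eval_mul, Polynomial.eval_pow,
      Polynomial.eval_X, Polynomial.eval_C, Pi.mul_apply]
    rw [e1, e2]
    ring

lemma contDiff_Gl (b : ℝ) (p : ℝ[X]) : ContDiff ℝ (⊤ : ℕ∞) (Gl b p) := by
  suffices H : ∀ (m : ℕ) (p : ℝ[X]), ContDiff ℝ m (Gl b p) by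
    exact contDiff_infty.2 fun m => H m p
  intro m
  induction m with
  | zero =>
    intro p
    have hd : Differentiable ℝ (Gl b p) := fun x => (hasDerivAt_Gl b p x).differentiableAt
    have hc : Continuous (Gl b p) := continuous_iff_continuousAt.2 fun x =>
      (hasDerivAt_Gl b p x).continuousAt
    simpa using (contDiff_zero (𝕜 := ℝ) (f := Gl b p)).2 hc
  | succ m ih =>
    intro p
    rw [show ((m + 1 : ℕ) : WithTop ℕ∞) = m + 1 from rfl]
    refine contDiff_succ_iff_deriv.2
      ⟨fun x => (hasDerivAt_Gl b p x).differentiableAt, by simp, ?_⟩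
    have hd : deriv (Gl b p) = Gl b (Qd b p) := funext fun x => (hasDerivAt_Gl b p x).deriv
    rw [hd]
    exact ih (Qd b p)


section Ex2Main

open Polynomial Real Filter Set Topology

variable {n : ℕ}

/-! ### Linear maps and coordinate calculus on `Sp n` -/

def timeCLM (n : ℕ) : Sp n →L[ℝ] ℝ := ContinuousLinearMap.fst ℝ ℝ (EuclideanSpace ℝ (Fin n))

def coordCLM (n : ℕ) (i : Fin n) : Sp n →L[ℝ] ℝ :=
  (EuclideanSpace.proj i).comp (ContinuousLinearMap.snd ℝ ℝ (EuclideanSpace ℝ (Fin n)))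

@[simp] lemma timeCLM_apply (v : Sp n) : timeCLM n v = v.1 := rfl

@[simp] lemma coordCLM_apply (i : Fin n) (v : Sp n) : coordCLM n i v = v.2 i := rfl

lemma normsq_eq (x : EuclideanSpace ℝ (Fin n)) : ‖x‖ ^ 2 = ∑ i, x i * x i := by
  rw [EuclideanSpace.norm_eq, Real.sq_sqrt (by positivity)]
  refine Finset.sum_congr rfl fun i _ => ?_
  rw [Real.norm_eq_abs, sq, abs_mul_abs_self]

lemma hasF_coord (i : Fin n) (p : Sp n) :
    HasFDerivAt (fun q : Sp n => q.2 i) (coordCLM n i) p :=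
  (coordCLM n i).hasFDerivAt

lemma hasF_fst (p : Sp n) : HasFDerivAt (fun q : Sp n => q.1) (timeCLM n) p :=
  (timeCLM n).hasFDerivAt

/-! ### The explicit positive-time formula and its derivative -/

def Vfun (n : ℕ) (α β γ κ : ℝ) (p : Sp n) : ℝ :=
  κ * p.1 ^ (-β) * Real.exp (-γ * (1 + ‖p.2‖ ^ 2) ^ (α / 2) / p.1)

lemma profileU_pos_eq {α β γ κ : ℝ} {p : Sp n} (hp : 0 < p.1) :
    profileU n α β γ κ p = Vfun n α β γ κ p := if_pos hp

lemma profileU_nonpos_eq {α β γ κ : ℝ} {p : Sp n} (hp : p.1 ≤ 0) :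
    profileU n α β γ κ p = 0 := if_neg (not_lt.2 hp)

lemma Wpos (x : EuclideanSpace ℝ (Fin n)) : (0:ℝ) < 1 + ‖x‖ ^ 2 := by positivity

def LNdef (n : ℕ) (p : Sp n) : Sp n →L[ℝ] ℝ :=
  ∑ i, (p.2 i • coordCLM n i + p.2 i • coordCLM n i)

def LBdef (n : ℕ) (α γ : ℝ) (p : Sp n) : Sp n →L[ℝ] ℝ :=
  (-γ * (1 + ‖p.2‖ ^ 2) ^ (α / 2)) • ((-(p.1 ^ 2)⁻¹) • timeCLM n) +
    (p.1)⁻¹ • ((-γ) • ((α / 2 * (1 + ‖p.2‖ ^ 2) ^ (α / 2 - 1)) • LNdef n p))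

def LVdef (n : ℕ) (α β γ κ : ℝ) (p : Sp n) : Sp n →L[ℝ] ℝ :=
  (κ * p.1 ^ (-β)) •
      (Real.exp (-γ * (1 + ‖p.2‖ ^ 2) ^ (α / 2) * (p.1)⁻¹) • LBdef n α γ p) +
    Real.exp (-γ * (1 + ‖p.2‖ ^ 2) ^ (α / 2) * (p.1)⁻¹) •
      (κ • ((-β * p.1 ^ (-β - 1)) • timeCLM n))

lemma hasFDerivAt_LN (p : Sp n) :
    HasFDerivAt (fun q : Sp n => 1 + ‖q.2‖ ^ 2) (LNdef n p) p := by
  have h0 : HasFDerivAt (fun q : Sp n => ∑ i, q.2 i * q.2 i) (LNdef n p) p :=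
    HasFDerivAt.fun_sum fun i _ => (hasF_coord i p).mul (hasF_coord i p)
  exact (h0.const_add 1).congr_of_eventuallyEq
    (Filter.Eventually.of_forall fun q => by simp only [normsq_eq])

lemma hasFDerivAt_Vfun {α β γ κ : ℝ} {p : Sp n} (hp : 0 < p.1) :
    HasFDerivAt (Vfun n α β γ κ) (LVdef n α β γ κ p) p := by
  have hN := hasFDerivAt_LN (n := n) p
  have hw : HasFDerivAt (fun q : Sp n => (1 + ‖q.2‖ ^ 2) ^ (α / 2))
      ((α / 2 * (1 + ‖p.2‖ ^ 2) ^ (α / 2 - 1)) • LNdef n p) p :=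
    by have h := (Real.hasDerivAt_rpow_const (p := α / 2) (Or.inl (Wpos p.2).ne')).comp_hasFDerivAt p hN; exact h
  have hinv : HasFDerivAt (fun q : Sp n => (q.1)⁻¹) ((-(p.1 ^ 2)⁻¹) • timeCLM n) p :=
    (hasDerivAt_inv hp.ne').comp_hasFDerivAt p (hasF_fst p)
  have hB : HasFDerivAt (fun q : Sp n => -γ * (1 + ‖q.2‖ ^ 2) ^ (α / 2) * (q.1)⁻¹)
      (LBdef n α γ p) p := (hw.const_mul (-γ)).mul hinv
  have hE : HasFDerivAt
      (fun q : Sp n => Real.exp (-γ * (1 + ‖q.2‖ ^ 2) ^ (α / 2) * (q.1)⁻¹))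
      (Real.exp (-γ * (1 + ‖p.2‖ ^ 2) ^ (α / 2) * (p.1)⁻¹) • LBdef n α γ p) p :=
    (Real.hasDerivAt_exp _).comp_hasFDerivAt p hB
  have hA : HasFDerivAt (fun q : Sp n => q.1 ^ (-β))
      ((-β * p.1 ^ (-β - 1)) • timeCLM n) p := by
    have h := (Real.hasDerivAt_rpow_const (p := -β) (Or.inl hp.ne')).comp_hasFDerivAt p
      (hasF_fst p)
    exact h
  have hV := (hA.const_mul κ).mul hE
  exact hV.congr_of_eventuallyEq
    (Filter.Eventually.of_forall fun q => by simp only [Vfun, div_eq_mul_inv, Pi.mul_apply])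

@[simp] lemma LN_dt (p : Sp n) : LNdef n p ((1:ℝ), (0 : EuclideanSpace ℝ (Fin n))) = 0 := by
  simp [LNdef]

@[simp] lemma LN_dx (p : Sp n) (i : Fin n) :
    LNdef n p ((0:ℝ), EuclideanSpace.single i (1:ℝ)) = 2 * p.2 i := by
  simp only [LNdef, ContinuousLinearMap.sum_apply, ContinuousLinearMap.add_apply,
    ContinuousLinearMap.smul_apply, coordCLM_apply, smul_eq_mul, EuclideanSpace.single_apply,
    mul_ite, mul_one, mul_zero]
  simp only [Finset.sum_add_distrib, Finset.sum_ite_eq', Finset.mem_univ, if_true]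
  ring

lemma exp_inv_eq {α γ : ℝ} (p : Sp n) :
    Real.exp (-γ * (1 + ‖p.2‖ ^ 2) ^ (α / 2) * (p.1)⁻¹) =
      Real.exp (-γ * (1 + ‖p.2‖ ^ 2) ^ (α / 2) / p.1) := by
  rw [div_eq_mul_inv (-γ * (1 + ‖p.2‖ ^ 2) ^ (α / 2)) p.1]

lemma LV_dt {α β γ κ : ℝ} {p : Sp n} (hp : 0 < p.1) :
    LVdef n α β γ κ p ((1:ℝ), (0 : EuclideanSpace ℝ (Fin n))) =
      Vfun n α β γ κ p * (γ * (1 + ‖p.2‖ ^ 2) ^ (α / 2) * (p.1 ^ 2)⁻¹ - β * (p.1)⁻¹) := by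
  have ht : p.1 ^ (-β - 1) = p.1 ^ (-β) * (p.1)⁻¹ := by
    rw [show -β - 1 = -β + -1 by ring, Real.rpow_add hp, Real.rpow_neg_one]
  simp only [LVdef, LBdef, ContinuousLinearMap.add_apply, ContinuousLinearMap.smul_apply,
    timeCLM_apply, LN_dt, smul_eq_mul, Vfun, exp_inv_eq]
  rw [ht]
  ring

lemma LV_dx {α β γ κ : ℝ} {p : Sp n} (hp : 0 < p.1) (i : Fin n) :
    LVdef n α β γ κ p ((0:ℝ), EuclideanSpace.single i (1:ℝ)) =
      Vfun n α β γ κ p *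
        (-(γ * α) * (1 + ‖p.2‖ ^ 2) ^ (α / 2 - 1) * p.2 i * (p.1)⁻¹) := by
  simp only [LVdef, LBdef, ContinuousLinearMap.add_apply, ContinuousLinearMap.smul_apply,
    timeCLM_apply, LN_dx, smul_eq_mul, Vfun, exp_inv_eq]
  ring

lemma profileU_eventuallyEq_Vfun {α β γ κ : ℝ} {p : Sp n} (hp : 0 < p.1) :
    profileU n α β γ κ =ᶠ[𝓝 p] Vfun n α β γ κ := by
  have hop : IsOpen {q : Sp n | 0 < q.1} := isOpen_lt continuous_const continuous_fst
  filter_upwards [hop.mem_nhds hp] with q hq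
  exact profileU_pos_eq hq

lemma pdt_profileU {α β γ κ : ℝ} {p : Sp n} (hp : 0 < p.1) :
    pdt (profileU n α β γ κ) p =
      Vfun n α β γ κ p * (γ * (1 + ‖p.2‖ ^ 2) ^ (α / 2) * (p.1 ^ 2)⁻¹ - β * (p.1)⁻¹) := by
  rw [pdt, (profileU_eventuallyEq_Vfun hp).fderiv_eq, (hasFDerivAt_Vfun hp).fderiv]
  exact LV_dt hp

lemma pdx_profileU {α β γ κ : ℝ} {p : Sp n} (hp : 0 < p.1) (i : Fin n) :
    pdx i (profileU n α β γ κ) p =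
      Vfun n α β γ κ p *
        (-(γ * α) * (1 + ‖p.2‖ ^ 2) ^ (α / 2 - 1) * p.2 i * (p.1)⁻¹) := by
  rw [pdx, (profileU_eventuallyEq_Vfun hp).fderiv_eq, (hasFDerivAt_Vfun hp).fderiv]
  exact LV_dx hp i

lemma coef_cancel {α : ℝ} (x : EuclideanSpace ℝ (Fin n)) :
    (1 + ‖x‖ ^ 2) ^ ((2 - α) / 2) * (1 + ‖x‖ ^ 2) ^ (α / 2 - 1) = 1 := by
  rw [← Real.rpow_add (Wpos x), show (2 - α) / 2 + (α / 2 - 1) = 0 by ring, Real.rpow_zero]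

/-- pointwise value of the summand `∂ᵢ(a ∂ᵢ u)` at positive times -/
lemma pdx_coef_term {α β γ κ : ℝ} {p : Sp n} (hp : 0 < p.1) (i : Fin n) :
    pdx i (fun q => coefDiag n α q * pdx i (profileU n α β γ κ) q) p =
      -(γ * α) * (p.1)⁻¹ *
        (Vfun n α β γ κ p +
          p.2 i * (Vfun n α β γ κ p *
            (-(γ * α) * (1 + ‖p.2‖ ^ 2) ^ (α / 2 - 1) * p.2 i * (p.1)⁻¹))) := by
  have hop : IsOpen {q : Sp n | 0 < q.1} := isOpen_lt continuous_const continuous_fst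
  have hev : (fun q => coefDiag n α q * pdx i (profileU n α β γ κ) q) =ᶠ[𝓝 p]
      fun q => -(γ * α) * (Vfun n α β γ κ q * q.2 i * (q.1)⁻¹) := by
    filter_upwards [hop.mem_nhds hp] with q hq
    rw [pdx_profileU hq i, coefDiag]
    have hc := coef_cancel (α := α) q.2
    linear_combination (-(γ * α) * (Vfun n α β γ κ q * q.2 i * (q.1)⁻¹)) * hc
  have hinv : HasFDerivAt (fun q : Sp n => (q.1)⁻¹) ((-(p.1 ^ 2)⁻¹) • timeCLM n) p :=
    (hasDerivAt_inv hp.ne').comp_hasFDerivAt p (hasF_fst p)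
  have hGi := (((hasFDerivAt_Vfun (α := α) (β := β) (γ := γ) (κ := κ) hp).mul
      (hasF_coord i p)).mul hinv).const_mul (-(γ * α))
  simp only [Pi.mul_apply] at hGi
  rw [pdx, hev.fderiv_eq, hGi.fderiv]
  simp only [ContinuousLinearMap.add_apply, ContinuousLinearMap.smul_apply,
    timeCLM_apply, coordCLM_apply, smul_eq_mul]
  rw [LV_dx hp i]
  simp [EuclideanSpace.single_apply]
  ring

/-! ### Vanishing of derivatives for `t ≤ 0` -/

lemma fderiv_zero_on_nonpos {f : Sp n → ℝ} (hf : ContDiff ℝ (⊤ : ℕ∞) f)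
    (h0 : ∀ p : Sp n, p.1 ≤ 0 → f p = 0) :
    ∀ p : Sp n, p.1 ≤ 0 → fderiv ℝ f p = 0 := by
  have hneg : ∀ p : Sp n, p.1 < 0 → fderiv ℝ f p = 0 := by
    intro p hp
    have hop : IsOpen {q : Sp n | q.1 < 0} := isOpen_lt continuous_fst continuous_const
    have hev : f =ᶠ[𝓝 p] fun _ => (0 : ℝ) := by
      filter_upwards [hop.mem_nhds hp] with q hq
      exact h0 q hq.le
    rw [hev.fderiv_eq]
    exact fderiv_const_apply 0
  intro p hp
  rcases lt_or_eq_of_le hp with h | h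
  · exact hneg p h
  · have hc : Continuous (fderiv ℝ f) := hf.continuous_fderiv (by simp)
    have hseq : Tendsto (fun k : ℕ => ((-(1 / ((k : ℝ) + 1)), p.2) : Sp n)) atTop (𝓝 p) := by
      have h1 : Tendsto (fun k : ℕ => -(1 / ((k : ℝ) + 1))) atTop (𝓝 (0 : ℝ)) := by
        simpa only [neg_zero] using (tendsto_one_div_add_atTop_nhds_zero_nat (𝕜 := ℝ)).neg
      have hcst : Tendsto (fun _ : ℕ => p.2) atTop (𝓝 p.2) := tendsto_const_nhds
      have := h1.prodMk_nhds hcst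
      rw [show p = ((0 : ℝ), p.2) from Prod.ext (by simp [h.symm]) rfl]
      exact this
    have h2 : Tendsto (fun k : ℕ => fderiv ℝ f ((-(1 / ((k : ℝ) + 1)), p.2) : Sp n)) atTop
        (𝓝 (fderiv ℝ f p)) := (hc.tendsto p).comp hseq
    have h3 : (fun k : ℕ => fderiv ℝ f ((-(1 / ((k : ℝ) + 1)), p.2) : Sp n)) =
        fun _ => (0 : Sp n →L[ℝ] ℝ) := by
      funext k
      refine hneg _ ?_
      have hk : (0:ℝ) < 1 / ((k : ℝ) + 1) := by positivity
      show -(1 / ((k : ℝ) + 1)) < 0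
      linarith
    rw [h3] at h2
    exact tendsto_nhds_unique h2 tendsto_const_nhds

lemma profileU_eq_glue {α β γ κ : ℝ} (hγ : 0 < γ) :
    profileU n α β γ κ = fun p : Sp n =>
      κ * ((γ * (1 + ‖p.2‖ ^ 2) ^ (α / 2)) ^ (-β) *
        Gl β 1 (p.1 / (γ * (1 + ‖p.2‖ ^ 2) ^ (α / 2)))) := by
  funext p
  have hw : (0:ℝ) < (1 + ‖p.2‖ ^ 2) ^ (α / 2) := Real.rpow_pos_of_pos (Wpos p.2) _
  have hgw : (0:ℝ) < γ * (1 + ‖p.2‖ ^ 2) ^ (α / 2) := mul_pos hγ hw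
  by_cases hp : 0 < p.1
  · rw [profileU_pos_eq hp, Gl_of_pos (div_pos hp hgw), Vfun]
    simp only [Polynomial.eval_one, one_mul]
    rw [Real.div_rpow hp.le hgw.le, inv_div]
    rw [show -γ * (1 + ‖p.2‖ ^ 2) ^ (α / 2) / p.1 =
      -(γ * (1 + ‖p.2‖ ^ 2) ^ (α / 2) / p.1) by ring]
    have hC : (γ * (1 + ‖p.2‖ ^ 2) ^ (α / 2)) ^ (-β) ≠ 0 :=
      (Real.rpow_pos_of_pos hgw _).ne'
    field_simp
  · push_neg at hp
    rw [profileU_nonpos_eq hp, Gl_of_nonpos (div_nonpos_of_nonpos_of_nonneg hp hgw.le)]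
    ring

lemma contDiff_profileU {α β γ κ : ℝ} (hγ : 0 < γ) :
    ContDiff ℝ (⊤ : ℕ∞) (profileU n α β γ κ) := by
  rw [profileU_eq_glue (n := n) (α := α) (β := β) (κ := κ) hγ]
  have hWc : ContDiff ℝ (⊤ : ℕ∞) (fun p : Sp n => 1 + ‖p.2‖ ^ 2) :=
    contDiff_const.add ((contDiff_norm_sq (𝕜 := ℝ)).comp contDiff_snd)
  refine contDiff_iff_contDiffAt.2 fun p => ?_
  have hWpos' := Wpos (n := n) p.2
  have h1 : ContDiffAt ℝ (⊤ : ℕ∞) (fun q : Sp n => γ * (1 + ‖q.2‖ ^ 2) ^ (α / 2)) p :=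
    contDiffAt_const.mul (hWc.contDiffAt.rpow_const_of_ne hWpos'.ne')
  have hgw : (0:ℝ) < γ * (1 + ‖p.2‖ ^ 2) ^ (α / 2) :=
    mul_pos hγ (Real.rpow_pos_of_pos hWpos' _)
  have h2 : ContDiffAt ℝ (⊤ : ℕ∞) (fun q : Sp n => (γ * (1 + ‖q.2‖ ^ 2) ^ (α / 2)) ^ (-β)) p :=
    h1.rpow_const_of_ne hgw.ne'
  have h3 : ContDiffAt ℝ (⊤ : ℕ∞)
      (fun q : Sp n => q.1 / (γ * (1 + ‖q.2‖ ^ 2) ^ (α / 2))) p :=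
    contDiff_fst.contDiffAt.div h1 hgw.ne'
  have h4 := (contDiff_Gl β 1).contDiffAt.comp p h3
  exact contDiffAt_const.mul (h2.mul h4)

lemma contDiff_coefDiag {α : ℝ} : ContDiff ℝ (⊤ : ℕ∞) (fun p : Sp n => coefDiag n α p) := by
  have hWc : ContDiff ℝ (⊤ : ℕ∞) (fun p : Sp n => 1 + ‖p.2‖ ^ 2) :=
    contDiff_const.add ((contDiff_norm_sq (𝕜 := ℝ)).comp contDiff_snd)
  exact contDiff_iff_contDiffAt.2 fun p =>
    hWc.contDiffAt.rpow_const_of_ne (Wpos p.2).ne'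

end Ex2Main

set_option maxHeartbeats 2000000 in
/-- **Example 2** (sharpness of Theorems 1–3 for `α > 0`): for `q > 1 + α/n` the profile
`u` is a nontrivial nonnegative `C^∞` classical solution of `u_t ≥ Σᵢ ∂_{x_i}(a_{ii} ∂_{x_i}u)
+ |u|^{q−1}u` in the whole space, with coefficients satisfying condition (8). -/
theorem example2_sharpness (n : ℕ) (hn : 1 ≤ n) (α q β γ κ : ℝ)
    (hα : 0 < α) (hq : 1 + α / n < q)
    (hβ : β = 1 / (q - 1))
    (hγl : 1 / (α * n * (q - 1)) < γ) (hγu : γ ≤ 1 / α ^ 2)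
    (hκl : 0 < κ) (hκu : κ ≤ (α * n * (γ - 1 / (α * n * (q - 1)))) ^ (1 / (q - 1))) :
    ContDiff ℝ (⊤ : ℕ∞) (profileU n α β γ κ) ∧
    (∀ p, 0 ≤ profileU n α β γ κ p) ∧
    profileU n α β γ κ ≠ 0 ∧
    (∀ p : Sp n,
      (∑ i : Fin n, pdx i (fun p' => coefDiag n α p' * pdx i (profileU n α β γ κ) p') p) +
        nl q (profileU n α β γ κ p) ≤ pdt (profileU n α β γ κ) p) ∧
    (∃ c : ℝ, 0 < c ∧ Cond8 (fun p : Sp n => coefDiag n α p) α c) := by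
  have hn' : (0:ℝ) < n := by exact_mod_cast hn
  have hq1 : 1 < q := by
    have : 0 < α / n := div_pos hα hn'
    linarith
  have hq0 : 0 < q - 1 := by linarith
  have hβpos : 0 < β := by rw [hβ]; positivity
  have hγ : 0 < γ := lt_trans (by positivity) hγl
  have hM : 0 < α * n * (γ - 1 / (α * n * (q - 1))) :=
    mul_pos (by positivity) (sub_pos.2 hγl)
  have hMeq : α * n * (γ - 1 / (α * n * (q - 1))) = γ * α * n - β := by
    rw [hβ]; field_simp
  have hκq : κ ^ (q - 1) ≤ γ * α * n - β := by
    calc κ ^ (q - 1) ≤ ((α * n * (γ - 1 / (α * n * (q - 1)))) ^ (1 / (q - 1))) ^ (q - 1) :=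
          Real.rpow_le_rpow hκl.le hκu hq0.le
      _ = α * n * (γ - 1 / (α * n * (q - 1))) := by
          rw [← Real.rpow_mul hM.le, show 1 / (q - 1) * (q - 1) = 1 by field_simp,
            Real.rpow_one]
      _ = γ * α * n - β := hMeq
  have hsm : ContDiff ℝ (⊤ : ℕ∞) (profileU n α β γ κ) := contDiff_profileU hγ
  refine ⟨hsm, ?_, ?_, ?_, ?_⟩
  · -- nonnegativity
    intro p
    rw [profileU]
    split_ifs with h
    · have : 0 < κ * p.1 ^ (-β) * Real.exp (-γ * (1 + ‖p.2‖ ^ 2) ^ (α / 2) / p.1) :=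
        mul_pos (mul_pos hκl (Real.rpow_pos_of_pos h _)) (Real.exp_pos _)
      linarith
    · exact le_refl 0
  · -- nontriviality
    intro h0
    have h1 : 0 < profileU n α β γ κ ((1:ℝ), (0 : EuclideanSpace ℝ (Fin n))) := by
      rw [profileU_pos_eq (by norm_num : (0:ℝ) < ((1:ℝ), (0 : EuclideanSpace ℝ (Fin n))).1)]
      exact mul_pos (mul_pos hκl (Real.rpow_pos_of_pos one_pos _)) (Real.exp_pos _)
    rw [h0] at h1
    simp at h1
  · -- the differential inequality
    intro p
    rcases lt_or_ge 0 p.1 with hp | hp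
    · -- positive times
      set t := p.1 with htdef
      set V := Vfun n α β γ κ p with hVdef
      set r := ‖p.2‖ ^ 2 with hrdef
      set w := (1 + ‖p.2‖ ^ 2) ^ (α / 2) with hwdef
      set w1 := (1 + ‖p.2‖ ^ 2) ^ (α / 2 - 1) with hw1def
      have hr0 : 0 ≤ r := by rw [hrdef]; positivity
      have hw0 : 0 < w := Real.rpow_pos_of_pos (Wpos p.2) _
      have hw10 : 0 < w1 := Real.rpow_pos_of_pos (Wpos p.2) _
      have hVpos : 0 < V := by
        rw [hVdef, Vfun]
        exact mul_pos (mul_pos hκl (Real.rpow_pos_of_pos hp _)) (Real.exp_pos _)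
      have hS : (∑ i : Fin n, pdx i
            (fun p' => coefDiag n α p' * pdx i (profileU n α β γ κ) p') p) =
          (n:ℝ) * (-(γ * α) * t⁻¹ * V) +
            (γ * α) * (γ * α) * w1 * t⁻¹ * t⁻¹ * V * r := by
        have h1 : ∀ i : Fin n,
            pdx i (fun p' => coefDiag n α p' * pdx i (profileU n α β γ κ) p') p =
              -(γ * α) * t⁻¹ * V +
                ((γ * α) * (γ * α) * w1 * t⁻¹ * t⁻¹ * V) * (p.2 i * p.2 i) := by
          intro i
          rw [pdx_coef_term hp i]
          ring
        rw [Finset.sum_congr rfl fun i _ => h1 i, Finset.sum_add_distrib,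
          Finset.sum_const, ← Finset.mul_sum, ← normsq_eq, Finset.card_univ,
          Fintype.card_fin]
        simp only [nsmul_eq_mul, hrdef]
      have hnl : nl q (profileU n α β γ κ p) = V ^ (q - 1) * V := by
        rw [profileU_pos_eq hp, ← hVdef, nl, abs_of_pos hVpos]
      have hpdt : pdt (profileU n α β γ κ) p = V * (γ * w * (t ^ 2)⁻¹ - β * t⁻¹) :=
        pdt_profileU hp
      -- key scalar inequalities
      have hw1r : w1 * r ≤ w := by
        have h1 : w1 * (1 + r) = w := by
          rw [hw1def, hwdef, hrdef, ← Real.rpow_add_one (Wpos p.2).ne',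
            show α / 2 - 1 + 1 = α / 2 by ring]
        calc w1 * r ≤ w1 * (1 + r) := by
              apply mul_le_mul_of_nonneg_left (by linarith) hw10.le
          _ = w := h1
      have hga : γ * α ^ 2 ≤ 1 := by
        rw [le_div_iff₀ (by positivity : (0:ℝ) < α ^ 2)] at hγu
        linarith
      have hkey1 : (γ * α) * (γ * α) * (w1 * r) ≤ γ * w := by
        have k1 : (γ * α) * (γ * α) * (w1 * r) ≤ (γ * α) * (γ * α) * w :=
          mul_le_mul_of_nonneg_left hw1r (by positivity)
        have k0 : (γ * α) * (γ * α) ≤ γ := by nlinarith [mul_le_mul_of_nonneg_left hga hγ.le]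
        have k2 : (γ * α) * (γ * α) * w ≤ γ * w := mul_le_mul_of_nonneg_right k0 hw0.le
        linarith
      have hVq : V ^ (q - 1) ≤ (γ * α * n - β) * t⁻¹ := by
        have hVval : V = κ * t ^ (-β) * Real.exp (-γ * w / t) := by
          rw [hVdef, Vfun]
        have h1 : V ^ (q - 1) =
            κ ^ (q - 1) * (t ^ (-β)) ^ (q - 1) * (Real.exp (-γ * w / t)) ^ (q - 1) := by
          rw [hVval, Real.mul_rpow (by positivity) (Real.exp_pos _).le,
            Real.mul_rpow hκl.le (by positivity)]
        have h2 : (t ^ (-β)) ^ (q - 1) = t⁻¹ := by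
          rw [← Real.rpow_mul hp.le, show -β * (q - 1) = -1 by
            rw [hβ]; field_simp, Real.rpow_neg_one]
        have h3 : (Real.exp (-γ * w / t)) ^ (q - 1) ≤ 1 := by
          rw [← Real.exp_mul]
          rw [Real.exp_le_one_iff]
          have he : -γ * w / t ≤ 0 := by
            apply div_nonpos_of_nonpos_of_nonneg _ hp.le
            nlinarith [hw0, hγ]
          exact mul_nonpos_of_nonpos_of_nonneg he hq0.le
        have h4 : (0:ℝ) ≤ κ ^ (q - 1) := Real.rpow_nonneg hκl.le _
        have h5 : (0:ℝ) ≤ t⁻¹ := by positivity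
        calc V ^ (q - 1) = κ ^ (q - 1) * t⁻¹ * (Real.exp (-γ * w / t)) ^ (q - 1) := by
              rw [h1, h2]
          _ ≤ κ ^ (q - 1) * t⁻¹ * 1 := by
              apply mul_le_mul_of_nonneg_left h3 (by positivity)
          _ = κ ^ (q - 1) * t⁻¹ := by ring
          _ ≤ (γ * α * n - β) * t⁻¹ := mul_le_mul_of_nonneg_right hκq h5
      -- assemble
      rw [hS, hnl, hpdt, show (t ^ 2)⁻¹ = t⁻¹ * t⁻¹ by rw [sq, mul_inv]]
      have hbr : (γ * α) * (γ * α) * w1 * t⁻¹ * t⁻¹ * V * r ≤ γ * w * (t⁻¹ * t⁻¹) * V := by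
        have h := mul_le_mul_of_nonneg_right hkey1
          (show (0:ℝ) ≤ t⁻¹ * t⁻¹ * V by positivity)
        linarith [h]
      have hqv : V ^ (q - 1) * V ≤ (γ * α * n - β) * t⁻¹ * V :=
        mul_le_mul_of_nonneg_right hVq hVpos.le
      linarith [hbr, hqv]
    · -- nonpositive times
      have hu0 : ∀ q' : Sp n, q'.1 ≤ 0 → profileU n α β γ κ q' = 0 :=
        fun q' h => profileU_nonpos_eq h
      have hfd := fderiv_zero_on_nonpos hsm hu0
      have hpdt0 : pdt (profileU n α β γ κ) p = 0 := by
        rw [pdt, hfd p hp]; rfl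
      have hnl0 : nl q (profileU n α β γ κ p) = 0 := by
        rw [profileU_nonpos_eq hp, nl]; simp
      have hterm0 : ∀ i : Fin n,
          pdx i (fun p' => coefDiag n α p' * pdx i (profileU n α β γ κ) p') p = 0 := by
        intro i
        have hgsm : ContDiff ℝ (⊤ : ℕ∞)
            (fun p' : Sp n => coefDiag n α p' * pdx i (profileU n α β γ κ) p') := by
          refine (contDiff_coefDiag (n := n) (α := α)).mul ?_
          have hfd' : ContDiff ℝ (⊤ : ℕ∞) (fderiv ℝ (profileU n α β γ κ)) :=
            hsm.fderiv_right (by simp)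
          exact hfd'.clm_apply contDiff_const
        have hg0 : ∀ q' : Sp n, q'.1 ≤ 0 →
            coefDiag n α q' * pdx i (profileU n α β γ κ) q' = 0 := by
          intro q' hq'
          rw [pdx, hfd q' hq']
          simp
        have := fderiv_zero_on_nonpos hgsm hg0 p hp
        rw [pdx, this]; rfl
      rw [hpdt0, hnl0, Finset.sum_congr rfl fun i _ => hterm0 i]
      simp
  · -- condition (8)
    refine ⟨2 ^ |2 - α|, Real.rpow_pos_of_pos two_pos _, ?_⟩
    intro R hR
    refine Filter.Eventually.of_forall ?_
    rintro p ⟨h1, h2⟩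
    have hR0 : (0:ℝ) < R := lt_trans one_pos hR
    have hxnn : (0:ℝ) ≤ ‖p.2‖ := norm_nonneg _
    by_cases hα2 : α ≤ 2
    · have hbase : 1 + ‖p.2‖ ^ 2 ≤ 2 * R ^ 2 := by nlinarith
      have e1 : coefDiag n α p ≤ (2 * R ^ 2) ^ ((2 - α) / 2) := by
        rw [coefDiag]
        exact Real.rpow_le_rpow (by positivity) hbase (by linarith)
      have e2 : ((2:ℝ) * R ^ 2) ^ ((2 - α) / 2) =
          2 ^ ((2 - α) / 2) * (R ^ 2) ^ ((2 - α) / 2) :=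
        Real.mul_rpow (by norm_num) (by positivity)
      have e3 : ((R:ℝ) ^ 2) ^ ((2 - α) / 2) = R ^ (2 - α) := by
        rw [← Real.rpow_natCast R 2, ← Real.rpow_mul hR0.le,
          show ((2:ℕ):ℝ) * ((2 - α) / 2) = 2 - α by push_cast; ring]
      have e4 : (2:ℝ) ^ ((2 - α) / 2) ≤ 2 ^ |2 - α| := by
        apply Real.rpow_le_rpow_of_exponent_le one_le_two
        rw [abs_of_nonneg (by linarith : (0:ℝ) ≤ 2 - α)]
        linarith
      calc coefDiag n α p ≤ 2 ^ ((2 - α) / 2) * R ^ (2 - α) := by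
            rw [← e3, ← e2]; exact e1
        _ ≤ 2 ^ |2 - α| * R ^ (2 - α) :=
            mul_le_mul_of_nonneg_right e4 (Real.rpow_nonneg hR0.le _)
    · push_neg at hα2
      have hx2 : (0:ℝ) < (R / 2) ^ 2 := by positivity
      have hbase : (R / 2) ^ 2 ≤ 1 + ‖p.2‖ ^ 2 := by
        have hx2 : (R / 2) ^ 2 ≤ ‖p.2‖ ^ 2 := pow_le_pow_left₀ (by positivity) h1.le 2
        linarith
      have e1 : coefDiag n α p ≤ ((R / 2) ^ 2) ^ ((2 - α) / 2) := by
        rw [coefDiag]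
        exact Real.rpow_le_rpow_of_nonpos hx2 hbase (by linarith)
      have e3 : (((R:ℝ) / 2) ^ 2) ^ ((2 - α) / 2) = (R / 2) ^ (2 - α) := by
        rw [← Real.rpow_natCast (R / 2) 2, ← Real.rpow_mul (by positivity : (0:ℝ) ≤ R / 2),
          show ((2:ℕ):ℝ) * ((2 - α) / 2) = 2 - α by push_cast; ring]
      have e5 : ((R:ℝ) / 2) ^ (2 - α) = R ^ (2 - α) * 2 ^ (α - 2) := by
        rw [Real.div_rpow hR0.le (by norm_num : (0:ℝ) ≤ 2), div_eq_mul_inv,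
          ← Real.rpow_neg (by norm_num : (0:ℝ) ≤ 2), show -(2 - α) = α - 2 by ring]
      have e4 : (2:ℝ) ^ (α - 2) ≤ 2 ^ |2 - α| := by
        apply Real.rpow_le_rpow_of_exponent_le one_le_two
        rw [abs_of_nonpos (by linarith : (2:ℝ) - α ≤ 0)]
        linarith
      calc coefDiag n α p ≤ R ^ (2 - α) * 2 ^ (α - 2) := by rw [← e5, ← e3]; exact e1
        _ ≤ R ^ (2 - α) * 2 ^ |2 - α| :=
            mul_le_mul_of_nonneg_left e4 (Real.rpow_nonneg hR0.le _)
        _ = 2 ^ |2 - α| * R ^ (2 - α) := by ring
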